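/- Subsigning is a partial order on signature closures: the reflexive transitive closure ⊴ of the immediate subsigning relation ⊴₁ is reflexive and transitive, and it is antisymmetric, i.e., if sc₁ ⊴ sc₂ and sc₂ ⊴ sc₁ then sc₁ = sc₂. -/
import Mathlib


/-- A class signature: a class name, the names of its immediate supersignatures,
its field signatures, and its method signatures. -/
structure ClassSig (N Lb : Type) where
  name : N
  supers : List N
  fields : List (Lb × N)
  methods : List (Lb × List N × N)
deriving DecidableEq

variable {N Lb : Type} [DecidableEq N] [DecidableEq Lb]

/-- Names referenced by a class signature (supersignatures, field types,
method parameter and result types). -/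
def ClassSig.refs (s : ClassSig N Lb) (nm : N) : Prop :=
  nm ∈ s.supers ∨ (∃ fs ∈ s.fields, fs.2 = nm) ∨
    ∃ ms ∈ s.methods, nm ∈ ms.2.1 ∨ ms.2.2 = nm

def UniqueNames (se : Finset (ClassSig N Lb)) : Prop :=
  ∀ s ∈ se, ∀ s' ∈ se, s.name = s'.name → s = s'

def RefClosed (se : Finset (ClassSig N Lb)) : Prop :=
  ∀ s ∈ se, ∀ nm, s.refs nm → ∃ s' ∈ se, s'.name = nm

/-- The immediate supersignature relation on names determined by `se`. -/
def SuperRel (se : Finset (ClassSig N Lb)) (nm nm' : N) : Prop :=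
  ∃ s ∈ se, s.name = nm ∧ nm' ∈ s.supers

/-- The supersignature graph of `se` is acyclic. -/
def AcyclicEnv (se : Finset (ClassSig N Lb)) : Prop :=
  ∀ nm, ¬ Relation.TransGen (SuperRel se) nm nm

/-- Member inclusion: each signature's members include those of its immediate
supersignatures. -/
def MemIncl (se : Finset (ClassSig N Lb)) : Prop :=
  ∀ s ∈ se, ∀ nm ∈ s.supers, ∀ s' ∈ se, s'.name = nm →
    (∀ fs ∈ s'.fields, fs ∈ s.fields) ∧ (∀ ms ∈ s'.methods, ms ∈ s.methods)

def IsSigEnv (se : Finset (ClassSig N Lb)) : Prop :=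
  UniqueNames se ∧ RefClosed se ∧ AcyclicEnv se ∧ MemIncl se

/-- The direct-reference (adjacency) relation on names determined by `se`. -/
def RefRel (se : Finset (ClassSig N Lb)) (nm nm' : N) : Prop :=
  ∃ s ∈ se, s.name = nm ∧ s.refs nm'

/-- A signature closure: a pair of a root signature name and a signature
environment. -/
abbrev SigClos (N Lb : Type) := N × Finset (ClassSig N Lb)

/-- Validity of a signature closure: its environment is a signature environment
containing a signature with the root name, and the environment is minimal, i.e.
every signature in it is reachable from the root by direct references. -/
def IsSigClos (sc : SigClos N Lb) : Prop :=
  IsSigEnv sc.2 ∧ (∃ s ∈ sc.2, s.name = sc.1) ∧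
    ∀ s ∈ sc.2, Relation.ReflTransGen (RefRel sc.2) sc.1 s.name

/-- Immediate subsigning: `sc₂ ⊴₁ sc₁` iff the environment of `sc₂` extends that
of `sc₁` and the name of `sc₁` is among the supersignature names of the root
signature of `sc₂`. -/
def Subsign1 (sc₂ sc₁ : SigClos N Lb) : Prop :=
  sc₁.2 ⊆ sc₂.2 ∧ ∃ s ∈ sc₂.2, s.name = sc₂.1 ∧ sc₁.1 ∈ s.supers

/-- Subsigning: the reflexive transitive closure of immediate subsigning. -/
def Subsign (sc₂ sc₁ : SigClos N Lb) : Prop :=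
  Relation.ReflTransGen Subsign1 sc₂ sc₁

lemma subsign_env_subset {sc₁ sc₂ : SigClos N Lb} (h : Subsign sc₁ sc₂) :
    sc₂.2 ⊆ sc₁.2 := by
  induction h with
  | refl => exact Finset.Subset.refl _
  | tail _ h2 ih => exact (h2.1).trans ih

lemma subsign_superRel {sc₁ sc₂ : SigClos N Lb} (h : Subsign sc₁ sc₂)
    (heq : sc₂.2 = sc₁.2) :
    Relation.ReflTransGen (SuperRel sc₁.2) sc₁.1 sc₂.1 := by
  induction h with
  | refl => exact Relation.ReflTransGen.refl
  | @tail c b hac h2 ih =>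
      have hc : c.2 = sc₁.2 := by
        apply Finset.Subset.antisymm (subsign_env_subset hac)
        rw [← heq]; exact h2.1
      refine (ih hc).tail ?_
      obtain ⟨s, hs, hn, hsup⟩ := h2.2
      exact ⟨s, hc ▸ hs, hn, hsup⟩

/-- subsigning is a partial order on signature closures: it is
reflexive, transitive, and antisymmetric on valid signature closures. -/
theorem subsign_partialOrder :
    Reflexive (Subsign (N := N) (Lb := Lb)) ∧
    Transitive (Subsign (N := N) (Lb := Lb)) ∧
    ∀ sc₁ sc₂ : SigClos N Lb, IsSigClos sc₁ → IsSigClos sc₂ →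
      Subsign sc₁ sc₂ → Subsign sc₂ sc₁ → sc₁ = sc₂ := by
  refine ⟨fun _ => Relation.ReflTransGen.refl,
    fun _ _ _ h1 h2 => h1.trans h2, ?_⟩
  intro sc₁ sc₂ h1 h2 h12 h21
  have henv : sc₂.2 = sc₁.2 :=
    Finset.Subset.antisymm (subsign_env_subset h12) (subsign_env_subset h21)
  have r1 : Relation.ReflTransGen (SuperRel sc₁.2) sc₁.1 sc₂.1 :=
    subsign_superRel h12 henv
  have r2 : Relation.ReflTransGen (SuperRel sc₁.2) sc₂.1 sc₁.1 := by
    have := subsign_superRel h21 henv.symm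
    rwa [henv] at this
  by_cases hn : sc₁.1 = sc₂.1
  · exact Prod.ext hn henv.symm
  · exfalso
    rcases (Relation.reflTransGen_iff_eq_or_transGen.mp r1) with h | h
    · exact hn h.symm
    · exact h1.1.2.2.1 sc₂.1 (Relation.TransGen.trans_right r2 h)
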